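/- Let Q and R be symmetric positive-definite linear maps on a finite-dimensional real inner product space and let c₁, c₂ > 0 satisfy c₁·Q ≼ R ≼ c₂·Q. Then (Q⁻¹ − R⁻¹) R (Q⁻¹ − R⁻¹) ≼ max{(1 − c₁)², (1 − c₂)²} · R⁻¹. -/

import Mathlib

open scoped RealInnerProductSpace

noncomputable section

/-- Loewner order: `X ≼ Y` iff `Y - X` is positive semidefinite. -/
def LoewnerLE {E : Type*} [NormedAddCommGroup E] [InnerProductSpace ℝ E]
    (X Y : E →ₗ[ℝ] E) : Prop :=
  ∀ u : E, ⟪u, X u⟫ ≤ ⟪u, Y u⟫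

private lemma cs_aux {V : Type*} [NormedAddCommGroup V] [InnerProductSpace ℝ V]
    (A : V →ₗ[ℝ] V) (hA : A.IsSymmetric) (h0 : ∀ w, 0 ≤ ⟪w, A w⟫) (x y : V) :
    ⟪x, A y⟫ ^ 2 ≤ ⟪x, A x⟫ * ⟪y, A y⟫ := by
  have hs : ⟪y, A x⟫ = ⟪x, A y⟫ := by rw [real_inner_comm]; exact hA x y
  have key : ∀ t : ℝ, 0 ≤ ⟪y, A y⟫ * (t * t) + (2 * ⟪x, A y⟫) * t + ⟪x, A x⟫ := by
    intro t
    have h := h0 (x + t • y)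
    simp only [map_add, map_smul, inner_add_left, inner_add_right,
      real_inner_smul_left, real_inner_smul_right] at h
    rw [hs] at h
    nlinarith [h]
  have hd := discrim_le_zero key
  rw [discrim] at hd
  nlinarith [hd]

private lemma scalar_key (c₁ c₂ m a b d q : ℝ) (hc₁ : 0 < c₁) (hc₂ : 0 < c₂)
    (ha : 0 < a) (hq : 0 < q) (hb : 0 ≤ b)
    (F1 : c₁ * q ≤ a) (F2 : a ≤ c₂ * q) (F3 : c₁ * b ≤ d) (F4 : d ≤ c₂ * b)
    (F5 : d - 2*c₁*b + c₁^2*a ≤ c₂ * (b - 2*c₁*a + c₁^2*q))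
    (F6 : c₁ * (b - 2*c₂*a + c₂^2*q) ≤ d - 2*c₂*b + c₂^2*a)
    (F7 : a^2 ≤ q * b) (F8 : b^2 ≤ a * d)
    (hm1 : (1 - c₁) ^ 2 ≤ m) (hm2 : (1 - c₂) ^ 2 ≤ m) :
    d - 2*b + a ≤ m * a := by
  have hm1a : (1 - c₁)^2 * a ≤ m * a := mul_le_mul_of_nonneg_right hm1 ha.le
  have hm2a : (1 - c₂)^2 * a ≤ m * a := mul_le_mul_of_nonneg_right hm2 ha.le
  have hc12 : c₁ ≤ c₂ := by nlinarith [F1, F2, hq]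
  have hba : c₁ * a ≤ b := by
    nlinarith [mul_le_mul_of_nonneg_right F1 hb, F7, ha]
  have hbc : b ≤ c₂ * a := by
    rcases hb.eq_or_lt with h | h
    · nlinarith
    · nlinarith [mul_le_mul_of_nonneg_left F4 ha.le, F8]
  rcases eq_or_lt_of_le hc12 with he | hlt
  · rw [← he] at F2 F4 F5 F6
    have hqa : c₁ * q = a := le_antisymm F1 F2
    have hdb : c₁ * b = d := le_antisymm F3 F4
    have hbca : b = c₁ * a := by nlinarith [F5, F6, hqa, hdb]
    have hd2 : d = c₁ * (c₁ * a) := by rw [← hdb, hbca]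
    have e : (1 - c₁)^2 * a = a - 2*(c₁*a) + c₁*(c₁*a) := by ring
    linarith [hm1a, hd2, hbca, e]
  · have hE : d - (c₁+c₂)*b + c₁*c₂*a ≤ 0 := by
      have X5 : 0 ≤ c₂ * (b - 2*c₁*a + c₁^2*q) - (d - 2*c₁*b + c₁^2*a) := by linarith
      have X6 : 0 ≤ (d - 2*c₂*b + c₂^2*a) - c₁ * (b - 2*c₂*a + c₂^2*q) := by linarith
      have hsum : 0 ≤ (c₁ - c₂) * (d - (c₁+c₂)*b + c₁*c₂*a) := by
        have h5 := mul_nonneg hc₂.le X5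
        have h6 := mul_nonneg hc₁.le X6
        have hid : c₂ * (c₂ * (b - 2*c₁*a + c₁^2*q) - (d - 2*c₁*b + c₁^2*a))
            + c₁ * ((d - 2*c₂*b + c₂^2*a) - c₁ * (b - 2*c₂*a + c₂^2*q))
            = (c₁ - c₂) * (d - (c₁+c₂)*b + c₁*c₂*a) := by ring
        linarith [h5, h6, hid.le, hid.ge]
      by_contra hcon
      push_neg at hcon
      have := mul_neg_of_neg_of_pos (show c₁ - c₂ < 0 by linarith) hcon
      linarith
    rcases le_total (c₁ + c₂) 2 with h2 | h2
    · have k1 := mul_le_mul_of_nonpos_left hba (show c₁ + c₂ - 2 ≤ 0 by linarith)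
      linarith [hE, k1, hm1a]
    · have k2 := mul_le_mul_of_nonneg_left hbc (show (0:ℝ) ≤ c₁ + c₂ - 2 by linarith)
      linarith [hE, k2, hm2a]

theorem stmt0 {V : Type*} [NormedAddCommGroup V] [InnerProductSpace ℝ V]
    [FiniteDimensional ℝ V]
    (Q R Qinv Rinv : V →ₗ[ℝ] V)
    (hQsym : Q.IsSymmetric) (hQpos : ∀ u : V, u ≠ 0 → 0 < ⟪u, Q u⟫)
    (hRsym : R.IsSymmetric) (hRpos : ∀ u : V, u ≠ 0 → 0 < ⟪u, R u⟫)
    (hQinv : Qinv ∘ₗ Q = LinearMap.id) (hQinv' : Q ∘ₗ Qinv = LinearMap.id)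
    (hRinv : Rinv ∘ₗ R = LinearMap.id) (hRinv' : R ∘ₗ Rinv = LinearMap.id)
    (c₁ c₂ : ℝ) (hc₁ : 0 < c₁) (hc₂ : 0 < c₂)
    (h₁ : LoewnerLE (c₁ • Q) R) (h₂ : LoewnerLE R (c₂ • Q)) :
    LoewnerLE ((Qinv - Rinv) ∘ₗ R ∘ₗ (Qinv - Rinv))
      (max ((1 - c₁) ^ 2) ((1 - c₂) ^ 2) • Rinv) := by
  have hQnn : ∀ w, 0 ≤ ⟪w, Q w⟫ := by
    intro w; by_cases h : w = 0
    · simp [h]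
    · exact (hQpos w h).le
  have hRnn : ∀ w, 0 ≤ ⟪w, R w⟫ := by
    intro w; by_cases h : w = 0
    · simp [h]
    · exact (hRpos w h).le
  have H1 : ∀ w, c₁ * ⟪w, Q w⟫ ≤ ⟪w, R w⟫ := by
    intro w
    simpa [LinearMap.smul_apply, real_inner_smul_right] using h₁ w
  have H2 : ∀ w, ⟪w, R w⟫ ≤ c₂ * ⟪w, Q w⟫ := by
    intro w
    simpa [LinearMap.smul_apply, real_inner_smul_right] using h₂ w
  have hQis : Qinv.IsSymmetric := by
    intro w z
    have hz : Q (Qinv z) = z := LinearMap.congr_fun hQinv' z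
    have hw : Q (Qinv w) = w := LinearMap.congr_fun hQinv' w
    calc ⟪Qinv w, z⟫ = ⟪Qinv w, Q (Qinv z)⟫ := by rw [hz]
      _ = ⟪Q (Qinv w), Qinv z⟫ := (hQsym (Qinv w) (Qinv z)).symm
      _ = ⟪w, Qinv z⟫ := by rw [hw]
  have hRis : Rinv.IsSymmetric := by
    intro w z
    have hz : R (Rinv z) = z := LinearMap.congr_fun hRinv' z
    have hw : R (Rinv w) = w := LinearMap.congr_fun hRinv' w
    calc ⟪Rinv w, z⟫ = ⟪Rinv w, R (Rinv z)⟫ := by rw [hz]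
      _ = ⟪R (Rinv w), Rinv z⟫ := (hRsym (Rinv w) (Rinv z)).symm
      _ = ⟪w, Rinv z⟫ := by rw [hw]
  intro u
  set m : ℝ := max ((1 - c₁) ^ 2) ((1 - c₂) ^ 2) with hm
  have hm1 : (1 - c₁) ^ 2 ≤ m := le_max_left _ _
  have hm2 : (1 - c₂) ^ 2 ≤ m := le_max_right _ _
  by_cases hu : u = 0
  · simp [hu]
  set x := Rinv u with hxdef
  set y := Qinv u with hydef
  have hxu : R x = u := LinearMap.congr_fun hRinv' u
  have hyu : Q y = u := LinearMap.congr_fun hQinv' u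
  have hx0 : x ≠ 0 := by
    intro h; apply hu; rw [← hxu, h, map_zero]
  set a : ℝ := ⟪x, R x⟫ with ha'
  set b : ℝ := ⟪y, Q y⟫ with hb'
  set d : ℝ := ⟪y, R y⟫ with hd'
  set q : ℝ := ⟪x, Q x⟫ with hq'
  have ha : 0 < a := hRpos x hx0
  have hq : 0 < q := hQpos x hx0
  have hb : 0 ≤ b := hQnn y
  -- cross inner products
  have hxQy : ⟪x, Q y⟫ = a := by rw [hyu, ← hxu]
  have hyQx : ⟪y, Q x⟫ = a := by
    rw [← hQsym y x, real_inner_comm, hyu, ← hxu]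
  have hxRy : ⟪x, R y⟫ = b := by
    rw [← hRsym x y, hxu, real_inner_comm, ← hyu]
  have hyRx : ⟪y, R x⟫ = b := by rw [hxu, ← hyu]
  -- scalar facts
  have F1 : c₁ * q ≤ a := H1 x
  have F2 : a ≤ c₂ * q := H2 x
  have F3 : c₁ * b ≤ d := H1 y
  have F4 : d ≤ c₂ * b := H2 y
  have hpQp : ⟪y - c₁ • x, Q (y - c₁ • x)⟫ = b - 2*c₁*a + c₁^2*q := by
    simp only [map_sub, map_smul, inner_sub_left, inner_sub_right,
      real_inner_smul_left, real_inner_smul_right, hxQy, hyQx]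
    ring
  have hpRp : ⟪y - c₁ • x, R (y - c₁ • x)⟫ = d - 2*c₁*b + c₁^2*a := by
    simp only [map_sub, map_smul, inner_sub_left, inner_sub_right,
      real_inner_smul_left, real_inner_smul_right, hxRy, hyRx]
    ring
  have hsQs : ⟪y - c₂ • x, Q (y - c₂ • x)⟫ = b - 2*c₂*a + c₂^2*q := by
    simp only [map_sub, map_smul, inner_sub_left, inner_sub_right,
      real_inner_smul_left, real_inner_smul_right, hxQy, hyQx]
    ring
  have hsRs : ⟪y - c₂ • x, R (y - c₂ • x)⟫ = d - 2*c₂*b + c₂^2*a := by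
    simp only [map_sub, map_smul, inner_sub_left, inner_sub_right,
      real_inner_smul_left, real_inner_smul_right, hxRy, hyRx]
    ring
  have F5 : d - 2*c₁*b + c₁^2*a ≤ c₂ * (b - 2*c₁*a + c₁^2*q) := by
    have := H2 (y - c₁ • x); rwa [hpQp, hpRp] at this
  have F6 : c₁ * (b - 2*c₂*a + c₂^2*q) ≤ d - 2*c₂*b + c₂^2*a := by
    have := H1 (y - c₂ • x); rwa [hsQs, hsRs] at this
  have F7 : a^2 ≤ q * b := by
    have := cs_aux Q hQsym hQnn x y; rwa [hxQy] at this
  have F8 : b^2 ≤ a * d := by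
    have := cs_aux R hRsym hRnn x y; rwa [hxRy] at this
  have key : d - 2*b + a ≤ m * a :=
    scalar_key c₁ c₂ m a b d q hc₁ hc₂ ha hq hb F1 F2 F3 F4 F5 F6 F7 F8 hm1 hm2
  have hS : (Qinv - Rinv).IsSymmetric := hQis.sub hRis
  have hLHS : ⟪u, ((Qinv - Rinv) ∘ₗ R ∘ₗ (Qinv - Rinv)) u⟫ = d - 2*b + a := by
    have h1 : (Qinv - Rinv) u = y - x := by simp [LinearMap.sub_apply, hxdef, hydef]
    rw [LinearMap.comp_apply, LinearMap.comp_apply, h1,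
      ← hS u (R (y - x)), h1]
    simp only [map_sub, inner_sub_left, inner_sub_right, hxRy, hyRx]
    ring
  have hRHS : ⟪u, (m • Rinv) u⟫ = m * a := by
    rw [LinearMap.smul_apply, real_inner_smul_right]
    congr 1
    rw [ha', real_inner_comm, hxu]
  rw [hLHS, hRHS]
  exact key
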